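/- Let X be a convex polyomino such that V(X) ⊆ ℕ² is a sublattice of ℕ² with minimum (0,0) and maximum (m,n). The set of left-boundary vertices of X is totally ordered under the componentwise order, and so is the set of bottom-boundary vertices of X. Consequently, if p and p' are incomparable join-irreducible elements of V(X), then one of them is a left-boundary vertex and the other is a bottom-boundary vertex. -/

import Mathlib

/-!  Cells in ℤ² are identified with their top-right corners: the cell `C v`
is the unit square `[v.1 - 1, v.1] × [v.2 - 1, v.2] ⊆ ℝ²`. -/

/-- Two cells (identified by their top-right corners) are adjacent if they share an edge. -/
def Adj (c d : ℤ × ℤ) : Prop :=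
  (c.1 = d.1 ∧ (c.2 = d.2 + 1 ∨ d.2 = c.2 + 1)) ∨
  (c.2 = d.2 ∧ (c.1 = d.1 + 1 ∨ d.1 = c.1 + 1))

/-- A polyomino: a nonempty finite set of cells, connected under adjacency. -/
def IsPolyomino (X : Finset (ℤ × ℤ)) : Prop :=
  X.Nonempty ∧ ∀ c ∈ X, ∀ d ∈ X,
    Relation.ReflTransGen (fun a b => a ∈ X ∧ b ∈ X ∧ Adj a b) c d

/-- A polyomino is convex if it is both row-convex and column-convex. -/
def IsConvexPoly (X : Finset (ℤ × ℤ)) : Prop :=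
  (∀ a b x y : ℤ, (a, y) ∈ X → (b, y) ∈ X → a ≤ x → x ≤ b → (x, y) ∈ X) ∧
  (∀ a b x y : ℤ, (y, a) ∈ X → (y, b) ∈ X → a ≤ x → x ≤ b → (y, x) ∈ X)

/-- `X` is thin if it contains no 2 × 2 block of four cells. -/
def IsThin (X : Finset (ℤ × ℤ)) : Prop :=
  ¬ ∃ w : ℤ × ℤ, w ∈ X ∧ w + ((1, 0) : ℤ × ℤ) ∈ X ∧
    w + ((0, 1) : ℤ × ℤ) ∈ X ∧ w + ((1, 1) : ℤ × ℤ) ∈ X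

/-- `X` is `L`-convex: convex, and any two cells are joined by a monotone path of cells
of `X` changing direction (horizontal to vertical or vice versa) at most once. -/
def IsLConvexPoly (X : Finset (ℤ × ℤ)) : Prop :=
  IsConvexPoly X ∧ ∀ c ∈ X, ∀ d ∈ X,
    ((∀ x : ℤ, min c.1 d.1 ≤ x → x ≤ max c.1 d.1 → ((x, c.2) : ℤ × ℤ) ∈ X) ∧
     (∀ y : ℤ, min c.2 d.2 ≤ y → y ≤ max c.2 d.2 → ((d.1, y) : ℤ × ℤ) ∈ X)) ∨
    ((∀ y : ℤ, min c.2 d.2 ≤ y → y ≤ max c.2 d.2 → ((c.1, y) : ℤ × ℤ) ∈ X) ∧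
     (∀ x : ℤ, min c.1 d.1 ≤ x → x ≤ max c.1 d.1 → ((x, d.2) : ℤ × ℤ) ∈ X))

/-- The vertex set `V(X)`: all corners of cells of `X`, partially ordered componentwise. -/
def Verts (X : Finset (ℤ × ℤ)) : Set (ℤ × ℤ) :=
  {v | ∃ c ∈ X, v = c ∨ v = c - ((1, 0) : ℤ × ℤ) ∨
    v = c - ((0, 1) : ℤ × ℤ) ∨ v = c - ((1, 1) : ℤ × ℤ)}

/-- Setup: `V(X) ⊆ ℕ²` is a sublattice of `ℕ²` (closed under componentwise max and min)
with minimum `(0,0)` and maximum `(m,n)`. -/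
def LatticeSetup (X : Finset (ℤ × ℤ)) (m n : ℕ) : Prop :=
  (∀ a ∈ Verts X, ∀ b ∈ Verts X, a ⊔ b ∈ Verts X ∧ a ⊓ b ∈ Verts X) ∧
  ((0, 0) : ℤ × ℤ) ∈ Verts X ∧ (((m : ℤ), (n : ℤ)) : ℤ × ℤ) ∈ Verts X ∧
  ∀ v ∈ Verts X, ((0, 0) : ℤ × ℤ) ≤ v ∧ v ≤ (((m : ℤ), (n : ℤ)) : ℤ × ℤ)

/-- Join-irreducible elements of the lattice `V(X)`: nonminimal elements that are not
the join of two elements strictly below them. -/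
def JoinIrr (X : Finset (ℤ × ℤ)) : Set (ℤ × ℤ) :=
  {p | p ∈ Verts X ∧ (∃ q ∈ Verts X, q < p) ∧
    ∀ a ∈ Verts X, ∀ b ∈ Verts X, a < p → b < p → a ⊔ b ≠ p}

/-- `ω` is an injective order-preserving map from `JI(X)` to `ℕ`. -/
def OmegaOK (X : Finset (ℤ × ℤ)) (ω : ℤ × ℤ → ℕ) : Prop :=
  Set.InjOn ω (JoinIrr X) ∧
  ∀ p ∈ JoinIrr X, ∀ q ∈ JoinIrr X, p ≤ q → ω p ≤ ω q

/-- A maximal chain of `V(X)`, written as a monotone unit lattice path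
`μ 0 = (0,0) < μ 1 < ⋯ < μ (m+n) = (m,n)` through vertices of `X`
(normalized by `μ i = (m,n)` for `i ≥ m+n`). -/
def IsMaxChainPath (X : Finset (ℤ × ℤ)) (m n : ℕ) (μ : ℕ → ℤ × ℤ) : Prop :=
  μ 0 = (0, 0) ∧
  (∀ i, i < m + n → μ (i + 1) - μ i = ((1, 0) : ℤ × ℤ) ∨
    μ (i + 1) - μ i = ((0, 1) : ℤ × ℤ)) ∧
  (∀ i, m + n ≤ i → μ i = (((m : ℤ), (n : ℤ)) : ℤ × ℤ)) ∧
  (∀ i, i ≤ m + n → μ i ∈ Verts X)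

/-- `i` is a descent of the maximal chain `μ`:  `ω p_i > ω p_{i+1}`, where `p_j` is the
unique join-irreducible `p` with `p ≤ μ j` and `p ≰ μ (j-1)`. -/
def DescentAt (X : Finset (ℤ × ℤ)) (ω : ℤ × ℤ → ℕ) (μ : ℕ → ℤ × ℤ) (i : ℕ) : Prop :=
  ∃ p ∈ JoinIrr X, ∃ q ∈ JoinIrr X,
    p ≤ μ i ∧ ¬ p ≤ μ (i - 1) ∧ q ≤ μ (i + 1) ∧ ¬ q ≤ μ i ∧ ω q < ω p

/-- The descent set of a maximal chain: descents `i` with `1 ≤ i ≤ m+n-1`. -/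
def Des (X : Finset (ℤ × ℤ)) (m n : ℕ) (ω : ℤ × ℤ → ℕ) (μ : ℕ → ℤ × ℤ) : Set ℕ :=
  {i | 1 ≤ i ∧ i < m + n ∧ DescentAt X ω μ i}

/-- `|M_k(X)|`: the number of maximal chains of `V(X)` with exactly `k` descents. -/
noncomputable def numChains (X : Finset (ℤ × ℤ)) (m n : ℕ) (ω : ℤ × ℤ → ℕ) (k : ℕ) : ℕ :=
  Set.ncard {μ : ℕ → ℤ × ℤ | IsMaxChainPath X m n μ ∧ (Des X m n ω μ).ncard = k}

/-- A `k`-rook configuration in `X`: `k` cells of `X`, no two in the same row or column. -/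
def IsRookConfig (X : Finset (ℤ × ℤ)) (k : ℕ) (S : Finset (ℤ × ℤ)) : Prop :=
  ↑S ⊆ (↑X : Set (ℤ × ℤ)) ∧ S.card = k ∧
  ∀ c ∈ S, ∀ d ∈ S, c ≠ d → c.1 ≠ d.1 ∧ c.2 ≠ d.2

/-- `r_k`: the number of `k`-rook configurations in `X`. -/
noncomputable def rook (X : Finset (ℤ × ℤ)) (k : ℕ) : ℕ :=
  Set.ncard {S : Finset (ℤ × ℤ) | IsRookConfig X k S}

/-- The map `ψ`: sends a maximal chain `μ` to the set of cells `C (μ (i+1))` for `i ∈ Des μ`. -/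
def psi (X : Finset (ℤ × ℤ)) (m n : ℕ) (ω : ℤ × ℤ → ℕ) (μ : ℕ → ℤ × ℤ) :
    Set (ℤ × ℤ) :=
  (fun i => μ (i + 1)) '' Des X m n ω μ

/-- The ideal `I_X` of the polyomino ring: generated by the inner 2-minors
`x_a x_b - x_c x_d` for intervals `[a,b]` of `V(X)`. -/
noncomputable def polyominoIdeal (kk : Type*) [Field kk] (X : Finset (ℤ × ℤ)) :
    Ideal (MvPolynomial (Verts X) kk) :=
  Ideal.span {f | ∃ a b c d : Verts X,
    (a : ℤ × ℤ) < (b : ℤ × ℤ) ∧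
    (c : ℤ × ℤ) = (((a : ℤ × ℤ).1, (b : ℤ × ℤ).2) : ℤ × ℤ) ∧
    (d : ℤ × ℤ) = (((b : ℤ × ℤ).1, (a : ℤ × ℤ).2) : ℤ × ℤ) ∧
    f = MvPolynomial.X a * MvPolynomial.X b - MvPolynomial.X c * MvPolynomial.X d}

/-- `dim_k (k[X])_i`: the dimension of the degree-`i` graded component of `k[X] = R/I_X`,
realized as the image of the homogeneous degree-`i` part of `R` in the quotient. -/
noncomputable def hilbCoeff (kk : Type*) [Field kk] (X : Finset (ℤ × ℤ)) (i : ℕ) : ℕ :=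
  Module.finrank kk (Submodule.map
    (Ideal.Quotient.mkₐ kk (polyominoIdeal kk X)).toLinearMap
    (MvPolynomial.homogeneousSubmodule (Verts X) kk i))

/-- The Hilbert series `HS(t) = Σ_{i ≥ 0} dim_k (k[X])_i t^i ∈ ℤ[[t]]`. -/
noncomputable def hilbSeries (kk : Type*) [Field kk] (X : Finset (ℤ × ℤ)) :
    PowerSeries ℤ :=
  PowerSeries.mk fun i => (hilbCoeff kk X i : ℤ)

/-- The region `⋃ X ⊆ ℝ²` covered by the cells of `X`. -/
def Region (X : Finset (ℤ × ℤ)) : Set (ℝ × ℝ) :=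
  ⋃ c ∈ X, Set.Icc (((c.1 : ℝ) - 1, (c.2 : ℝ) - 1) : ℝ × ℝ) (((c.1 : ℝ), (c.2 : ℝ)) : ℝ × ℝ)

/-- Left-boundary vertices: top-left corners of cells of `X` lying on the topological
boundary of the region `⋃ X ⊆ ℝ²`. -/
def LeftBdry (X : Finset (ℤ × ℤ)) : Set (ℤ × ℤ) :=
  {v | (∃ c ∈ X, v = c - ((1, 0) : ℤ × ℤ)) ∧
    (((v.1 : ℝ), (v.2 : ℝ)) : ℝ × ℝ) ∈ frontier (Region X)}

/-- Bottom-boundary vertices: bottom-right corners of cells of `X` lying on the topological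
boundary of the region `⋃ X ⊆ ℝ²`. -/
def BottomBdry (X : Finset (ℤ × ℤ)) : Set (ℤ × ℤ) :=
  {v | (∃ c ∈ X, v = c - ((0, 1) : ℤ × ℤ)) ∧
    (((v.1 : ℝ), (v.2 : ℝ)) : ℝ × ℝ) ∈ frontier (Region X)}

-- ### auxiliary lemmas

lemma verts_intro {X : Finset (ℤ × ℤ)} {i j : ℤ} (hc : ((i, j) : ℤ × ℤ) ∈ X)
    (a b : ℤ) (ha : a = i ∨ a = i - 1) (hb : b = j ∨ b = j - 1) :
    ((a, b) : ℤ × ℤ) ∈ Verts X := by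
  refine ⟨(i, j), hc, ?_⟩
  rcases ha with rfl | rfl <;> rcases hb with rfl | rfl
  · exact Or.inl rfl
  · exact Or.inr (Or.inr (Or.inl (by simp [Prod.ext_iff, Prod.mk_sub_mk])))
  · exact Or.inr (Or.inl (by simp [Prod.ext_iff, Prod.mk_sub_mk]))
  · exact Or.inr (Or.inr (Or.inr (by simp [Prod.ext_iff, Prod.mk_sub_mk])))

lemma verts_elim {X : Finset (ℤ × ℤ)} {v : ℤ × ℤ} (hv : v ∈ Verts X) :
    ∃ c ∈ X, (c.1 = v.1 ∧ c.2 = v.2) ∨ (c.1 = v.1 + 1 ∧ c.2 = v.2) ∨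
      (c.1 = v.1 ∧ c.2 = v.2 + 1) ∨ (c.1 = v.1 + 1 ∧ c.2 = v.2 + 1) := by
  obtain ⟨c, hc, h⟩ := hv
  refine ⟨c, hc, ?_⟩
  rcases h with rfl | rfl | rfl | rfl <;> simp [Prod.fst_sub, Prod.snd_sub]

section Main
variable {X : Finset (ℤ × ℤ)} {m n : ℕ}

lemma verts_bounds (hlat : LatticeSetup X m n) {v : ℤ × ℤ} (hv : v ∈ Verts X) :
    0 ≤ v.1 ∧ 0 ≤ v.2 ∧ v.1 ≤ (m : ℤ) ∧ v.2 ≤ (n : ℤ) := by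
  obtain ⟨h1, h2⟩ := hlat.2.2.2 v hv
  rw [Prod.le_def] at h1 h2
  exact ⟨h1.1, h1.2, h2.1, h2.2⟩

lemma cell_bounds (hlat : LatticeSetup X m n) {c : ℤ × ℤ} (hc : c ∈ X) :
    1 ≤ c.1 ∧ 1 ≤ c.2 ∧ c.1 ≤ (m : ℤ) ∧ c.2 ≤ (n : ℤ) := by
  have h1 := verts_bounds hlat (⟨c, hc, Or.inl rfl⟩ : c ∈ Verts X)
  have h2 := verts_bounds hlat (⟨c, hc, Or.inr (Or.inr (Or.inr rfl))⟩ :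
    c - ((1,1) : ℤ × ℤ) ∈ Verts X)
  simp [Prod.fst_sub, Prod.snd_sub] at h2
  omega

lemma cell_one (hlat : LatticeSetup X m n) : ((1, 1) : ℤ × ℤ) ∈ X := by
  obtain ⟨c, hc, h⟩ := verts_elim hlat.2.1
  have hb := cell_bounds hlat hc
  have : c = ((1,1) : ℤ × ℤ) := by
    rw [Prod.ext_iff]
    simp at h ⊢
    omega
  rwa [this] at hc

lemma cell_mn (hlat : LatticeSetup X m n) : (((m : ℤ), (n : ℤ)) : ℤ × ℤ) ∈ X := by
  obtain ⟨c, hc, h⟩ := verts_elim hlat.2.2.1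
  have hb := cell_bounds hlat hc
  have : c = (((m:ℤ), (n:ℤ)) : ℤ × ℤ) := by
    rw [Prod.ext_iff]
    simp at h ⊢
    omega
  rwa [this] at hc

lemma adj_bounds {c d : ℤ × ℤ} (h : Adj c d) :
    (d.1 = c.1 ∨ d.1 = c.1 + 1 ∨ d.1 = c.1 - 1) ∧
    (d.2 = c.2 ∨ d.2 = c.2 + 1 ∨ d.2 = c.2 - 1) := by
  rcases h with ⟨h1, h2 | h2⟩ | ⟨h1, h2 | h2⟩ <;> omega

lemma path_ivt_fst {c d : ℤ × ℤ} (hc : c ∈ X)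
    (h : Relation.ReflTransGen (fun a b => a ∈ X ∧ b ∈ X ∧ Adj a b) c d)
    {i : ℤ} (h1 : c.1 ≤ i) (h2 : i ≤ d.1) : ∃ e ∈ X, e.1 = i := by
  induction h with
  | refl => exact ⟨c, hc, le_antisymm h1 (by omega)⟩
  | tail _ hstep ih =>
    rename_i b d _
    by_cases hb : i ≤ b.1
    · exact ih hb
    · have := (adj_bounds hstep.2.2).1
      exact ⟨d, hstep.2.1, by omega⟩

lemma path_ivt_snd {c d : ℤ × ℤ} (hc : c ∈ X)
    (h : Relation.ReflTransGen (fun a b => a ∈ X ∧ b ∈ X ∧ Adj a b) c d)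
    {i : ℤ} (h1 : c.2 ≤ i) (h2 : i ≤ d.2) : ∃ e ∈ X, e.2 = i := by
  induction h with
  | refl => exact ⟨c, hc, le_antisymm h1 (by omega)⟩
  | tail _ hstep ih =>
    rename_i b d _
    by_cases hb : i ≤ b.2
    · exact ih hb
    · have := (adj_bounds hstep.2.2).2
      exact ⟨d, hstep.2.1, by omega⟩

lemma path_cross_fst {c d : ℤ × ℤ}
    (h : Relation.ReflTransGen (fun a b => a ∈ X ∧ b ∈ X ∧ Adj a b) c d)
    {i : ℤ} (h1 : c.1 ≤ i) (h2 : i + 1 ≤ d.1) :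
    ∃ y : ℤ, ((i, y) : ℤ × ℤ) ∈ X ∧ ((i + 1, y) : ℤ × ℤ) ∈ X := by
  induction h with
  | refl => omega
  | tail _ hstep ih =>
    rename_i b d _
    by_cases hb : i + 1 ≤ b.1
    · exact ih hb
    · have hab := adj_bounds hstep.2.2
      have hb1 : b.1 = i := by omega
      have hd1 : d.1 = i + 1 := by omega
      rcases hstep.2.2 with ⟨h', _⟩ | ⟨h', _⟩
      · omega
      · refine ⟨b.2, ?_, ?_⟩
        · have : ((i, b.2) : ℤ × ℤ) = b := by rw [Prod.ext_iff]; exact ⟨hb1.symm, rfl⟩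
          rw [this]; exact hstep.1
        · have : ((i + 1, b.2) : ℤ × ℤ) = d := by rw [Prod.ext_iff]; exact ⟨hd1.symm, h'⟩
          rw [this]; exact hstep.2.1

lemma path_cross_snd {c d : ℤ × ℤ}
    (h : Relation.ReflTransGen (fun a b => a ∈ X ∧ b ∈ X ∧ Adj a b) c d)
    {i : ℤ} (h1 : c.2 ≤ i) (h2 : i + 1 ≤ d.2) :
    ∃ x : ℤ, ((x, i) : ℤ × ℤ) ∈ X ∧ ((x, i + 1) : ℤ × ℤ) ∈ X := by
  induction h with
  | refl => omega
  | tail _ hstep ih =>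
    rename_i b d _
    by_cases hb : i + 1 ≤ b.2
    · exact ih hb
    · have hab := adj_bounds hstep.2.2
      have hb1 : b.2 = i := by omega
      have hd1 : d.2 = i + 1 := by omega
      rcases hstep.2.2 with ⟨h', _⟩ | ⟨h', _⟩
      · refine ⟨b.1, ?_, ?_⟩
        · have : ((b.1, i) : ℤ × ℤ) = b := by rw [Prod.ext_iff]; exact ⟨rfl, hb1.symm⟩
          rw [this]; exact hstep.1
        · have : ((b.1, i + 1) : ℤ × ℤ) = d := by rw [Prod.ext_iff]; exact ⟨h', hd1.symm⟩
          rw [this]; exact hstep.2.1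
      · omega

end Main

section Main2
variable {X : Finset (ℤ × ℤ)} {m n : ℕ}

lemma col_nonempty (hpoly : IsPolyomino X) (hlat : LatticeSetup X m n)
    {i : ℤ} (h1 : 1 ≤ i) (h2 : i ≤ (m : ℤ)) : ∃ y : ℤ, ((i, y) : ℤ × ℤ) ∈ X := by
  have hp := hpoly.2 _ (cell_one hlat) _ (cell_mn hlat)
  obtain ⟨e, he, hei⟩ := path_ivt_fst (cell_one hlat) hp h1 h2
  exact ⟨e.2, by rwa [show ((i, e.2) : ℤ × ℤ) = e by rw [Prod.ext_iff]; exact ⟨hei.symm, rfl⟩]⟩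

lemma row_nonempty (hpoly : IsPolyomino X) (hlat : LatticeSetup X m n)
    {j : ℤ} (h1 : 1 ≤ j) (h2 : j ≤ (n : ℤ)) : ∃ x : ℤ, ((x, j) : ℤ × ℤ) ∈ X := by
  have hp := hpoly.2 _ (cell_one hlat) _ (cell_mn hlat)
  obtain ⟨e, he, hei⟩ := path_ivt_snd (cell_one hlat) hp h1 h2
  exact ⟨e.1, by rwa [show ((e.1, j) : ℤ × ℤ) = e by rw [Prod.ext_iff]; exact ⟨rfl, hei.symm⟩]⟩

lemma cross_cols (hpoly : IsPolyomino X) {a b : ℤ × ℤ} (ha : a ∈ X) (hb : b ∈ X)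
    {i : ℤ} (h1 : a.1 ≤ i) (h2 : i + 1 ≤ b.1) :
    ∃ y : ℤ, ((i, y) : ℤ × ℤ) ∈ X ∧ ((i + 1, y) : ℤ × ℤ) ∈ X :=
  path_cross_fst (hpoly.2 a ha b hb) h1 h2

lemma cross_rows (hpoly : IsPolyomino X) {a b : ℤ × ℤ} (ha : a ∈ X) (hb : b ∈ X)
    {j : ℤ} (h1 : a.2 ≤ j) (h2 : j + 1 ≤ b.2) :
    ∃ x : ℤ, ((x, j) : ℤ × ℤ) ∈ X ∧ ((x, j + 1) : ℤ × ℤ) ∈ X :=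
  path_cross_snd (hpoly.2 a ha b hb) h1 h2

/-- If column `i+1` has a cell at height `b` and column `i` is nonempty, then
column `i` has a cell at height `≤ b`. -/
lemma Bmono (hpoly : IsPolyomino X) (hconv : IsConvexPoly X) (hlat : LatticeSetup X m n)
    {i b y0 : ℤ} (hb : ((i + 1, b) : ℤ × ℤ) ∈ X) (h0 : ((i, y0) : ℤ × ℤ) ∈ X) :
    ∃ y ≤ b, ((i, y) : ℤ × ℤ) ∈ X := by
  by_contra hcon
  push_neg at hcon
  have hcol : ∀ y : ℤ, ((i, y) : ℤ × ℤ) ∈ X → b < y := by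
    intro y hy
    by_contra h
    exact hcon y (by omega) hy
  have hy0 : b < y0 := hcol y0 h0
  -- vertices
  have hu1 : ((i, b - 1) : ℤ × ℤ) ∈ Verts X :=
    verts_intro hb i (b-1) (Or.inr (by ring)) (Or.inr rfl)
  have hu2 : ((i - 1, y0 - 1) : ℤ × ℤ) ∈ Verts X :=
    verts_intro h0 (i-1) (y0-1) (Or.inr rfl) (Or.inr rfl)
  have hinf := (hlat.1 _ hu1 _ hu2).2
  have heq : ((i, b - 1) : ℤ × ℤ) ⊓ ((i - 1, y0 - 1) : ℤ × ℤ) = ((i - 1, b - 1) : ℤ × ℤ) := by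
    rw [Prod.inf_def, Prod.ext_iff]
    simp
    omega
  rw [heq] at hinf
  obtain ⟨g, hg, hgc⟩ := verts_elim hinf
  simp only at hgc
  -- g is in column i-1 at height ≤ b
  have hg1 : g.1 = i - 1 ∧ g.2 ≤ b := by
    rcases hgc with ⟨e1, e2⟩ | ⟨e1, e2⟩ | ⟨e1, e2⟩ | ⟨e1, e2⟩
    · exact ⟨e1, by omega⟩
    · exfalso; have := hcol g.2 (by rwa [show ((i, g.2) : ℤ × ℤ) = g by
        rw [Prod.ext_iff]; exact ⟨by omega, rfl⟩]); omega
    · exact ⟨e1, by omega⟩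
    · exfalso; have := hcol g.2 (by rwa [show ((i, g.2) : ℤ × ℤ) = g by
        rw [Prod.ext_iff]; exact ⟨by omega, rfl⟩]); omega
  obtain ⟨y', hy'1, hy'2⟩ := cross_cols hpoly hg h0 (i := i - 1) (le_of_eq hg1.1) (by omega)
  rw [show (i - 1 + 1 : ℤ) = i by omega] at hy'2
  have hby' : b < y' := hcol y' hy'2
  -- column i-1 contains g.2 ≤ b and y' > b, hence contains b
  have hgcell : ((i - 1, g.2) : ℤ × ℤ) ∈ X := by
    rwa [show ((i - 1, g.2) : ℤ × ℤ) = g by rw [Prod.ext_iff]; exact ⟨hg1.1.symm, rfl⟩]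
  have hib : ((i - 1, b) : ℤ × ℤ) ∈ X := hconv.2 g.2 y' b (i-1) hgcell hy'1 hg1.2 (by omega)
  -- row b contains i-1 and i+1, hence i
  have : ((i, b) : ℤ × ℤ) ∈ X := hconv.1 (i-1) (i+1) i b hib hb (by omega) (by omega)
  exact absurd (hcol b this) (by omega)

/-- If column `i` has a cell at height `b` and column `i+1` is nonempty, then
column `i+1` has a cell at height `≥ b`. -/
lemma Tmono (hpoly : IsPolyomino X) (hconv : IsConvexPoly X) (hlat : LatticeSetup X m n)
    {i b y0 : ℤ} (hb : ((i, b) : ℤ × ℤ) ∈ X) (h0 : ((i + 1, y0) : ℤ × ℤ) ∈ X) :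
    ∃ y, b ≤ y ∧ ((i + 1, y) : ℤ × ℤ) ∈ X := by
  by_contra hcon
  push_neg at hcon
  have hcol : ∀ y : ℤ, ((i + 1, y) : ℤ × ℤ) ∈ X → y < b := by
    intro y hy
    by_contra h
    exact hcon y (by omega) hy
  have hy0 : y0 < b := hcol y0 h0
  have hu1 : ((i, b) : ℤ × ℤ) ∈ Verts X := verts_intro hb i b (Or.inl rfl) (Or.inl rfl)
  have hu2 : ((i + 1, y0) : ℤ × ℤ) ∈ Verts X :=
    verts_intro h0 (i+1) y0 (Or.inl rfl) (Or.inl rfl)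
  have hsup := (hlat.1 _ hu1 _ hu2).1
  have heq : ((i, b) : ℤ × ℤ) ⊔ ((i + 1, y0) : ℤ × ℤ) = ((i + 1, b) : ℤ × ℤ) := by
    rw [Prod.sup_def, Prod.ext_iff]
    simp
    omega
  rw [heq] at hsup
  obtain ⟨g, hg, hgc⟩ := verts_elim hsup
  simp only at hgc
  have hg1 : g.1 = i + 2 ∧ b ≤ g.2 := by
    rcases hgc with ⟨e1, e2⟩ | ⟨e1, e2⟩ | ⟨e1, e2⟩ | ⟨e1, e2⟩
    · exfalso; have := hcol g.2 (by rwa [show ((i + 1, g.2) : ℤ × ℤ) = g by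
        rw [Prod.ext_iff]; exact ⟨by omega, rfl⟩]); omega
    · exact ⟨by omega, by omega⟩
    · exfalso; have := hcol g.2 (by rwa [show ((i + 1, g.2) : ℤ × ℤ) = g by
        rw [Prod.ext_iff]; exact ⟨by omega, rfl⟩]); omega
    · exact ⟨by omega, by omega⟩
  obtain ⟨y', hy'1, hy'2⟩ := cross_cols hpoly h0 hg (i := i + 1) (by omega) (by omega)
  have hby' : y' < b := hcol y' hy'1
  rw [show (i + 1 + 1 : ℤ) = i + 2 by omega] at hy'2
  have hgcell : ((i + 2, g.2) : ℤ × ℤ) ∈ X := by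
    rwa [show ((i + 2, g.2) : ℤ × ℤ) = g by rw [Prod.ext_iff]; exact ⟨hg1.1.symm, rfl⟩]
  have hib : ((i + 2, b) : ℤ × ℤ) ∈ X := hconv.2 y' g.2 b (i+2) hy'2 hgcell (by omega) hg1.2
  have : ((i + 1, b) : ℤ × ℤ) ∈ X := hconv.1 i (i+2) (i+1) b hb hib (by omega) (by omega)
  exact absurd (hcol b this) (by omega)

lemma meet_reach (hpoly : IsPolyomino X) (hconv : IsConvexPoly X) (hlat : LatticeSetup X m n) :
    ∀ (k : ℕ) (i b : ℤ), 1 ≤ i → ((i + (k : ℤ), b) : ℤ × ℤ) ∈ X →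
      ∃ y ≤ b, ((i, y) : ℤ × ℤ) ∈ X := by
  intro k
  induction k with
  | zero => intro i b _ h; exact ⟨b, le_refl b, by simpa using h⟩
  | succ k ih =>
    intro i b hi h
    have h' : ((i + 1 + (k : ℤ), b) : ℤ × ℤ) ∈ X := by
      have e : i + 1 + (k : ℤ) = i + ((k + 1 : ℕ) : ℤ) := by push_cast; ring
      rw [e]; exact h
    obtain ⟨y1, hy1, hc1⟩ := ih (i + 1) b (by omega) h'
    have him : i ≤ (m : ℤ) := by
      have := (cell_bounds hlat hc1).2.2.1
      omega
    obtain ⟨y0, hy0⟩ := col_nonempty hpoly hlat hi him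
    obtain ⟨y, hy, hc⟩ := Bmono hpoly hconv hlat hc1 hy0
    exact ⟨y, by omega, hc⟩

lemma join_reach (hpoly : IsPolyomino X) (hconv : IsConvexPoly X) (hlat : LatticeSetup X m n) :
    ∀ (k : ℕ) (i b : ℤ), ((i, b) : ℤ × ℤ) ∈ X → i + (k : ℤ) ≤ (m : ℤ) →
      ∃ y, b ≤ y ∧ ((i + (k : ℤ), y) : ℤ × ℤ) ∈ X := by
  intro k
  induction k with
  | zero => intro i b h _; exact ⟨b, le_refl b, by simpa using h⟩
  | succ k ih =>
    intro i b h hm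
    obtain ⟨y0, hy0⟩ := col_nonempty hpoly hlat
      (by have := (cell_bounds hlat h).1; omega : (1:ℤ) ≤ i + 1) (by omega)
    obtain ⟨y1, hy1, hc1⟩ := Tmono hpoly hconv hlat h hy0
    obtain ⟨y, hy, hc⟩ := ih (i + 1) y1 hc1 (by omega)
    refine ⟨y, by omega, ?_⟩
    have e : i + ((k + 1 : ℕ) : ℤ) = i + 1 + (k : ℤ) := by push_cast; ring
    rw [e]; exact hc

/-- Cells are closed under join. -/
lemma join_closed (hpoly : IsPolyomino X) (hconv : IsConvexPoly X) (hlat : LatticeSetup X m n)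
    {a b : ℤ × ℤ} (ha : a ∈ X) (hb : b ∈ X) (h1 : a.1 ≤ b.1) (h2 : b.2 ≤ a.2) :
    ((b.1, a.2) : ℤ × ℤ) ∈ X := by
  have haa : ((a.1, a.2) : ℤ × ℤ) ∈ X := by rwa [Prod.mk.eta]
  have hbb : ((b.1, b.2) : ℤ × ℤ) ∈ X := by rwa [Prod.mk.eta]
  obtain ⟨y, hy, hc⟩ := join_reach hpoly hconv hlat (b.1 - a.1).toNat a.1 a.2 haa
    (by have := (cell_bounds hlat hb).2.2.1; omega)
  rw [show (a.1 + ((b.1 - a.1).toNat : ℤ)) = b.1 by omega] at hc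
  exact hconv.2 b.2 y a.2 b.1 hbb hc h2 hy

/-- Cells are closed under meet. -/
lemma meet_closed (hpoly : IsPolyomino X) (hconv : IsConvexPoly X) (hlat : LatticeSetup X m n)
    {a b : ℤ × ℤ} (ha : a ∈ X) (hb : b ∈ X) (h1 : a.1 ≤ b.1) (h2 : b.2 ≤ a.2) :
    ((a.1, b.2) : ℤ × ℤ) ∈ X := by
  have haa : ((a.1, a.2) : ℤ × ℤ) ∈ X := by rwa [Prod.mk.eta]
  have hbb : ((b.1, b.2) : ℤ × ℤ) ∈ X := by rwa [Prod.mk.eta]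
  obtain ⟨y, hy, hc⟩ := meet_reach hpoly hconv hlat (b.1 - a.1).toNat a.1 b.2
    (by have := (cell_bounds hlat ha).1; omega)
    (by rwa [show (a.1 + ((b.1 - a.1).toNat : ℤ)) = b.1 by omega])
  exact hconv.2 y a.2 b.2 a.1 hc haa hy h2

end Main2

section Topo
variable {X : Finset (ℤ × ℤ)}

lemma mem_region_iff (p : ℝ × ℝ) : p ∈ Region X ↔
    ∃ c ∈ X, ((c.1 : ℝ) - 1 ≤ p.1 ∧ p.1 ≤ (c.1 : ℝ)) ∧ ((c.2 : ℝ) - 1 ≤ p.2 ∧ p.2 ≤ (c.2 : ℝ)) := by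
  simp only [Region, Set.mem_iUnion₂, Set.mem_Icc, Prod.le_def]
  constructor
  · rintro ⟨c, hc, ⟨h1, h2⟩, h3, h4⟩
    exact ⟨c, hc, ⟨h1, h3⟩, ⟨h2, h4⟩⟩
  · rintro ⟨c, hc, ⟨h1, h2⟩, h3, h4⟩
    exact ⟨c, hc, ⟨h1, h3⟩, ⟨h2, h4⟩⟩

lemma region_closed : IsClosed (Region X) := by
  apply Set.Finite.isClosed_biUnion (X.finite_toSet)
  intro c _
  rw [Set.Icc_prod_eq]
  exact (isClosed_Icc.prod isClosed_Icc)

lemma force_coord {a c : ℤ} {x : ℝ} (h1 : (c : ℝ) - 1 ≤ x) (h2 : x ≤ (c : ℝ))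
    (h3 : (a : ℝ) - 1 < x) (h4 : x < (a : ℝ)) : c = a := by
  have e1 : (c : ℝ) < (a : ℝ) + 1 := by linarith
  have e2 : (a : ℝ) - 1 < (c : ℝ) := by linarith
  have f1 : c < a + 1 := by exact_mod_cast e1
  have f2 : a - 1 < c := by exact_mod_cast e2
  omega

lemma interior_iff (v : ℤ × ℤ) :
    (((v.1 : ℝ), (v.2 : ℝ)) : ℝ × ℝ) ∈ interior (Region X) ↔
      (((v.1, v.2) : ℤ × ℤ) ∈ X ∧ ((v.1 + 1, v.2) : ℤ × ℤ) ∈ X ∧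
       ((v.1, v.2 + 1) : ℤ × ℤ) ∈ X ∧ ((v.1 + 1, v.2 + 1) : ℤ × ℤ) ∈ X) := by
  constructor
  · intro h
    obtain ⟨ε, hε, hball⟩ := Metric.mem_nhds_iff.1 (mem_interior_iff_mem_nhds.1 h)
    set δ : ℝ := min ε 1 / 2 with hδ
    have hδ0 : 0 < δ := by
      have : (0:ℝ) < min ε 1 := lt_min hε one_pos
      positivity
    have hδε : δ < ε := by
      have : min ε 1 ≤ ε := min_le_left _ _
      linarith
    have hδ1 : δ < 1 := by
      have : min ε 1 ≤ 1 := min_le_right _ _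
      linarith
    have key : ∀ s t : ℤ, s = 0 ∨ s = 1 → t = 0 ∨ t = 1 →
        ((v.1 + s, v.2 + t) : ℤ × ℤ) ∈ X := by
      intro s t hs ht
      set p : ℝ × ℝ := ((v.1 : ℝ) + (2 * s - 1) * δ, (v.2 : ℝ) + (2 * t - 1) * δ) with hp
      have habs1 : |(2 * (s:ℝ) - 1) * δ| = δ := by
        rcases hs with rfl | rfl <;> push_cast <;> rw [abs_mul] <;>
          simp [abs_of_pos hδ0, abs_of_nonneg] <;> norm_num
      have habs2 : |(2 * (t:ℝ) - 1) * δ| = δ := by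
        rcases ht with rfl | rfl <;> push_cast <;> rw [abs_mul] <;>
          simp [abs_of_pos hδ0, abs_of_nonneg] <;> norm_num
      have hpball : p ∈ Metric.ball (((v.1 : ℝ), (v.2 : ℝ)) : ℝ × ℝ) ε := by
        rw [Metric.mem_ball, Prod.dist_eq]
        simp only [Real.dist_eq, hp]
        rw [show (v.1 : ℝ) + (2 * s - 1) * δ - v.1 = (2 * (s:ℝ) - 1) * δ by ring,
          show (v.2 : ℝ) + (2 * t - 1) * δ - v.2 = (2 * (t:ℝ) - 1) * δ by ring,
          habs1, habs2]
        simpa using hδε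
      obtain ⟨c, hc, ⟨h1, h2⟩, h3, h4⟩ := (mem_region_iff p).1 (hball hpball)
      have hx1 : ((v.1 + s : ℤ) : ℝ) - 1 < p.1 ∧ p.1 < ((v.1 + s : ℤ) : ℝ) := by
        rcases hs with rfl | rfl <;> constructor <;> simp [hp] <;> push_cast <;> nlinarith
      have hx2 : ((v.2 + t : ℤ) : ℝ) - 1 < p.2 ∧ p.2 < ((v.2 + t : ℤ) : ℝ) := by
        rcases ht with rfl | rfl <;> constructor <;> simp [hp] <;> push_cast <;> nlinarith
      have e1 : c.1 = v.1 + s := force_coord h1 h2 hx1.1 hx1.2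
      have e2 : c.2 = v.2 + t := force_coord h3 h4 hx2.1 hx2.2
      rwa [show ((v.1 + s, v.2 + t) : ℤ × ℤ) = c by rw [Prod.ext_iff]; exact ⟨e1.symm, e2.symm⟩]
    refine ⟨?_, ?_, ?_, ?_⟩
    · simpa using key 0 0 (Or.inl rfl) (Or.inl rfl)
    · simpa using key 1 0 (Or.inr rfl) (Or.inl rfl)
    · simpa using key 0 1 (Or.inl rfl) (Or.inr rfl)
    · simpa using key 1 1 (Or.inr rfl) (Or.inr rfl)
  · rintro ⟨h00, h10, h01, h11⟩
    rw [mem_interior]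
    refine ⟨Set.Ioo ((v.1 : ℝ) - 1) ((v.1 : ℝ) + 1) ×ˢ Set.Ioo ((v.2 : ℝ) - 1) ((v.2 : ℝ) + 1),
      ?_, (isOpen_Ioo.prod isOpen_Ioo), ?_⟩
    · rintro ⟨x, y⟩ hxy
      obtain ⟨⟨hx1, hx2⟩, hy1, hy2⟩ := hxy
      rw [mem_region_iff]
      rcases le_or_gt x (v.1 : ℝ) with hx | hx <;> rcases le_or_gt y (v.2 : ℝ) with hy | hy
      · exact ⟨((v.1, v.2) : ℤ × ℤ), h00, by constructor <;> constructor <;>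
          simp <;> push_cast <;> linarith⟩
      · exact ⟨((v.1, v.2 + 1) : ℤ × ℤ), h01, by constructor <;> constructor <;>
          simp <;> push_cast <;> linarith⟩
      · exact ⟨((v.1 + 1, v.2) : ℤ × ℤ), h10, by constructor <;> constructor <;>
          simp <;> push_cast <;> linarith⟩
      · exact ⟨((v.1 + 1, v.2 + 1) : ℤ × ℤ), h11, by constructor <;> constructor <;>
          simp <;> push_cast <;> linarith⟩
    · constructor <;> constructor <;> simp <;> linarith

lemma corner_mem_region {c : ℤ × ℤ} (hc : c ∈ X) {v : ℤ × ℤ}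
    (h1 : c.1 = v.1 ∨ c.1 = v.1 + 1) (h2 : c.2 = v.2 ∨ c.2 = v.2 + 1) :
    (((v.1 : ℝ), (v.2 : ℝ)) : ℝ × ℝ) ∈ Region X := by
  rw [mem_region_iff]
  have e1 : (c.1 : ℝ) ≤ (v.1 : ℝ) + 1 ∧ (v.1 : ℝ) ≤ (c.1 : ℝ) := by
    rcases h1 with e | e <;> rw [e] <;> push_cast <;> constructor <;> linarith
  have e2 : (c.2 : ℝ) ≤ (v.2 : ℝ) + 1 ∧ (v.2 : ℝ) ≤ (c.2 : ℝ) := by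
    rcases h2 with e | e <;> rw [e] <;> push_cast <;> constructor <;> linarith
  refine ⟨c, hc, ⟨?_, ?_⟩, ?_, ?_⟩
  · show (c.1 : ℝ) - 1 ≤ (v.1 : ℝ); linarith [e1.1]
  · show (v.1 : ℝ) ≤ (c.1 : ℝ); exact e1.2
  · show (c.2 : ℝ) - 1 ≤ (v.2 : ℝ); linarith [e2.1]
  · show (v.2 : ℝ) ≤ (c.2 : ℝ); exact e2.2

lemma mem_frontier_of (v : ℤ × ℤ) (hmem : (((v.1 : ℝ), (v.2 : ℝ)) : ℝ × ℝ) ∈ Region X)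
    (hnot : ¬ (((v.1, v.2) : ℤ × ℤ) ∈ X ∧ ((v.1 + 1, v.2) : ℤ × ℤ) ∈ X ∧
       ((v.1, v.2 + 1) : ℤ × ℤ) ∈ X ∧ ((v.1 + 1, v.2 + 1) : ℤ × ℤ) ∈ X)) :
    (((v.1 : ℝ), (v.2 : ℝ)) : ℝ × ℝ) ∈ frontier (Region X) := by
  rw [(region_closed (X := X)).frontier_eq]
  exact ⟨hmem, fun h => hnot ((interior_iff v).1 h)⟩

lemma not_frontier_of (v : ℤ × ℤ)
    (h : ((v.1, v.2) : ℤ × ℤ) ∈ X ∧ ((v.1 + 1, v.2) : ℤ × ℤ) ∈ X ∧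
       ((v.1, v.2 + 1) : ℤ × ℤ) ∈ X ∧ ((v.1 + 1, v.2 + 1) : ℤ × ℤ) ∈ X) :
    (((v.1 : ℝ), (v.2 : ℝ)) : ℝ × ℝ) ∉ frontier (Region X) := by
  rw [(region_closed (X := X)).frontier_eq]
  rintro ⟨-, hni⟩
  exact hni ((interior_iff v).2 h)

end Topo

section Main4
variable {X : Finset (ℤ × ℤ)} {m n : ℕ}

lemma leftBdry_cell {v : ℤ × ℤ} (hv : v ∈ LeftBdry X) :
    ((v.1 + 1, v.2) : ℤ × ℤ) ∈ X := by
  obtain ⟨⟨c, hc, hvc⟩, -⟩ := hv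
  have e1 : v.1 = c.1 - 1 := by rw [hvc]; simp
  have e2 : v.2 = c.2 := by rw [hvc]; simp
  rwa [show ((v.1 + 1, v.2) : ℤ × ℤ) = c by rw [Prod.ext_iff]; exact ⟨by omega, by omega⟩]

lemma bottomBdry_cell {v : ℤ × ℤ} (hv : v ∈ BottomBdry X) :
    ((v.1, v.2 + 1) : ℤ × ℤ) ∈ X := by
  obtain ⟨⟨c, hc, hvc⟩, -⟩ := hv
  have e1 : v.1 = c.1 := by rw [hvc]; simp
  have e2 : v.2 = c.2 - 1 := by rw [hvc]; simp
  rwa [show ((v.1, v.2 + 1) : ℤ × ℤ) = c by rw [Prod.ext_iff]; exact ⟨by omega, by omega⟩]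

lemma LB_aux (hpoly : IsPolyomino X) (hconv : IsConvexPoly X) (hlat : LatticeSetup X m n)
    {v w : ℤ × ℤ} (hv : v ∈ LeftBdry X) (hw : w ∈ LeftBdry X)
    (h1 : v.1 < w.1) (h2 : w.2 < v.2) : False := by
  have hA : ((v.1 + 1, v.2) : ℤ × ℤ) ∈ X := leftBdry_cell hv
  have hB : ((w.1 + 1, w.2) : ℤ × ℤ) ∈ X := leftBdry_cell hw
  have hJ : ((w.1 + 1, v.2) : ℤ × ℤ) ∈ X :=
    join_closed hpoly hconv hlat (a := ((v.1 + 1, v.2) : ℤ × ℤ))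
      (b := ((w.1 + 1, w.2) : ℤ × ℤ)) hA hB (show v.1 + 1 ≤ w.1 + 1 by omega)
      (show w.2 ≤ v.2 by omega)
  have hW11 : ((w.1 + 1, w.2 + 1) : ℤ × ℤ) ∈ X :=
    hconv.2 w.2 v.2 (w.2 + 1) (w.1 + 1) hB hJ (by omega) (by omega)
  have hM : ((v.1 + 1, w.2) : ℤ × ℤ) ∈ X :=
    meet_closed hpoly hconv hlat (a := ((v.1 + 1, v.2) : ℤ × ℤ))
      (b := ((w.1 + 1, w.2) : ℤ × ℤ)) hA hB (show v.1 + 1 ≤ w.1 + 1 by omega)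
      (show w.2 ≤ v.2 by omega)
  have hW00 : ((w.1, w.2) : ℤ × ℤ) ∈ X :=
    hconv.1 (v.1 + 1) (w.1 + 1) w.1 w.2 hM hB (by omega) (by omega)
  have hJ2 : ((w.1, v.2) : ℤ × ℤ) ∈ X :=
    join_closed hpoly hconv hlat (a := ((v.1 + 1, v.2) : ℤ × ℤ))
      (b := ((w.1, w.2) : ℤ × ℤ)) hA hW00 (show v.1 + 1 ≤ w.1 by omega)
      (show w.2 ≤ v.2 by omega)
  have hW01 : ((w.1, w.2 + 1) : ℤ × ℤ) ∈ X :=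
    hconv.2 w.2 v.2 (w.2 + 1) w.1 hW00 hJ2 (by omega) (by omega)
  exact not_frontier_of w ⟨hW00, hB, hW01, hW11⟩ hw.2

lemma BB_aux (hpoly : IsPolyomino X) (hconv : IsConvexPoly X) (hlat : LatticeSetup X m n)
    {v w : ℤ × ℤ} (hv : v ∈ BottomBdry X) (hw : w ∈ BottomBdry X)
    (h1 : v.1 < w.1) (h2 : w.2 < v.2) : False := by
  have hA : ((v.1, v.2 + 1) : ℤ × ℤ) ∈ X := bottomBdry_cell hv
  have hB : ((w.1, w.2 + 1) : ℤ × ℤ) ∈ X := bottomBdry_cell hw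
  have hM : ((v.1, w.2 + 1) : ℤ × ℤ) ∈ X :=
    meet_closed hpoly hconv hlat (a := ((v.1, v.2 + 1) : ℤ × ℤ))
      (b := ((w.1, w.2 + 1) : ℤ × ℤ)) hA hB (show v.1 ≤ w.1 by omega)
      (show w.2 + 1 ≤ v.2 + 1 by omega)
  have hV00 : ((v.1, v.2) : ℤ × ℤ) ∈ X :=
    hconv.2 (w.2 + 1) (v.2 + 1) v.2 v.1 hM hA (by omega) (by omega)
  have hJ : ((w.1, v.2 + 1) : ℤ × ℤ) ∈ X :=
    join_closed hpoly hconv hlat (a := ((v.1, v.2 + 1) : ℤ × ℤ))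
      (b := ((w.1, w.2 + 1) : ℤ × ℤ)) hA hB (show v.1 ≤ w.1 by omega)
      (show w.2 + 1 ≤ v.2 + 1 by omega)
  have hV11 : ((v.1 + 1, v.2 + 1) : ℤ × ℤ) ∈ X :=
    hconv.1 v.1 w.1 (v.1 + 1) (v.2 + 1) hA hJ (by omega) (by omega)
  have hM2 : ((v.1 + 1, w.2 + 1) : ℤ × ℤ) ∈ X :=
    meet_closed hpoly hconv hlat (a := ((v.1 + 1, v.2 + 1) : ℤ × ℤ))
      (b := ((w.1, w.2 + 1) : ℤ × ℤ)) hV11 hB (show v.1 + 1 ≤ w.1 by omega)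
      (show w.2 + 1 ≤ v.2 + 1 by omega)
  have hV10 : ((v.1 + 1, v.2) : ℤ × ℤ) ∈ X :=
    hconv.2 (w.2 + 1) (v.2 + 1) v.2 (v.1 + 1) hM2 hV11 (by omega) (by omega)
  exact not_frontier_of v ⟨hV00, hV10, hA, hV11⟩ hv.2

lemma joinirr_bdry (hpoly : IsPolyomino X) (hconv : IsConvexPoly X)
    (hlat : LatticeSetup X m n) {p : ℤ × ℤ} (hp : p ∈ JoinIrr X) :
    p ∈ LeftBdry X ∨ p ∈ BottomBdry X := by
  obtain ⟨hpv, ⟨q, hqv, hqp⟩, hirr⟩ := hp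
  have hnotp : ((p.1, p.2) : ℤ × ℤ) ∉ X := by
    intro hc
    have ha : ((p.1 - 1, p.2) : ℤ × ℤ) ∈ Verts X :=
      verts_intro hc (p.1 - 1) p.2 (Or.inr rfl) (Or.inl rfl)
    have hb : ((p.1, p.2 - 1) : ℤ × ℤ) ∈ Verts X :=
      verts_intro hc p.1 (p.2 - 1) (Or.inl rfl) (Or.inr rfl)
    have lt1 : ((p.1 - 1, p.2) : ℤ × ℤ) < p := by
      rw [← Prod.mk.eta (p := p), Prod.mk_lt_mk]
      exact Or.inl ⟨by omega, le_refl _⟩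
    have lt2 : ((p.1, p.2 - 1) : ℤ × ℤ) < p := by
      rw [← Prod.mk.eta (p := p), Prod.mk_lt_mk]
      exact Or.inr ⟨le_refl _, by omega⟩
    have heq : ((p.1 - 1, p.2) : ℤ × ℤ) ⊔ ((p.1, p.2 - 1) : ℤ × ℤ) = p := by
      rw [Prod.sup_def, ← Prod.mk.eta (p := p), Prod.ext_iff]
      constructor <;> simp <;> omega
    exact hirr _ ha _ hb lt1 lt2 heq
  obtain ⟨c, hc, hcc⟩ := verts_elim hpv
  rcases hcc with ⟨e1, e2⟩ | ⟨e1, e2⟩ | ⟨e1, e2⟩ | ⟨e1, e2⟩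
  · exact absurd (by rwa [show ((p.1, p.2) : ℤ × ℤ) = c by
      rw [Prod.ext_iff]; exact ⟨e1.symm, e2.symm⟩]) hnotp
  · left
    refine ⟨⟨c, hc, ?_⟩, mem_frontier_of p (corner_mem_region hc (Or.inr e1) (Or.inl e2))
      (fun h => hnotp h.1)⟩
    rw [Prod.ext_iff]
    constructor <;> simp <;> omega
  · right
    refine ⟨⟨c, hc, ?_⟩, mem_frontier_of p (corner_mem_region hc (Or.inl e1) (Or.inr e2))
      (fun h => hnotp h.1)⟩
    rw [Prod.ext_iff]
    constructor <;> simp <;> omega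
  · -- the diagonal cell
    have hd : ((p.1 + 1, p.2 + 1) : ℤ × ℤ) ∈ X := by
      rwa [show ((p.1 + 1, p.2 + 1) : ℤ × ℤ) = c by
        rw [Prod.ext_iff]; exact ⟨e1.symm, e2.symm⟩]
    by_cases hL : ((p.1 + 1, p.2) : ℤ × ℤ) ∈ X
    · left
      refine ⟨⟨(p.1 + 1, p.2), hL, ?_⟩, mem_frontier_of p
        (corner_mem_region hL (Or.inr rfl) (Or.inl rfl)) (fun h => hnotp h.1)⟩
      rw [Prod.ext_iff]
      constructor <;> simp
    by_cases hBm : ((p.1, p.2 + 1) : ℤ × ℤ) ∈ X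
    · right
      refine ⟨⟨(p.1, p.2 + 1), hBm, ?_⟩, mem_frontier_of p
        (corner_mem_region hBm (Or.inl rfl) (Or.inr rfl)) (fun h => hnotp h.1)⟩
      rw [Prod.ext_iff]
      constructor <;> simp
    exfalso
    have hpb := verts_bounds hlat hpv
    have hqb := verts_bounds hlat hqv
    have hpq : 1 ≤ p.1 ∨ 1 ≤ p.2 := by
      rcases Prod.lt_iff.1 hqp with ⟨h, -⟩ | ⟨-, h⟩ <;> omega
    rcases hpq with hp1 | hp2
    · obtain ⟨y, hy⟩ := col_nonempty hpoly hlat hp1 hpb.2.2.1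
      rcases le_or_gt y p.2 with hyle | hygt
      · obtain ⟨y', h1', h2'⟩ := cross_cols hpoly hy hd (i := p.1)
          (show p.1 ≤ p.1 from le_refl _) (show p.1 + 1 ≤ p.1 + 1 from le_refl _)
        rcases le_or_gt y' p.2 with h | h
        · exact hL (hconv.2 y' (p.2 + 1) p.2 (p.1 + 1) h2' hd h (by omega))
        · exact hnotp (hconv.2 y y' p.2 p.1 hy h1' hyle (by omega))
      · exact hBm (meet_closed hpoly hconv hlat (a := ((p.1, y) : ℤ × ℤ))
          (b := ((p.1 + 1, p.2 + 1) : ℤ × ℤ)) hy hd (show p.1 ≤ p.1 + 1 by omega)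
          (show p.2 + 1 ≤ y by omega))
    · obtain ⟨x, hx⟩ := row_nonempty hpoly hlat hp2 hpb.2.2.2
      rcases le_or_gt x p.1 with hxle | hxgt
      · obtain ⟨x', h1', h2'⟩ := cross_rows hpoly hx hd (j := p.2)
          (show p.2 ≤ p.2 from le_refl _) (show p.2 + 1 ≤ p.2 + 1 from le_refl _)
        rcases le_or_gt x' p.1 with h | h
        · exact hBm (hconv.1 x' (p.1 + 1) p.1 (p.2 + 1) h2' hd h (by omega))
        · exact hnotp (hconv.1 x x' p.1 p.2 hx h1' hxle (by omega))
      · exact hL (meet_closed hpoly hconv hlat (a := ((p.1 + 1, p.2 + 1) : ℤ × ℤ))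
          (b := ((x, p.2) : ℤ × ℤ)) hd hx (show p.1 + 1 ≤ x by omega)
          (show p.2 ≤ p.2 + 1 by omega))

end Main4


theorem boundary_vertices_totally_ordered (X : Finset (ℤ × ℤ)) (m n : ℕ)
    (hpoly : IsPolyomino X) (hconv : IsConvexPoly X)
    (hlat : LatticeSetup X m n) :
    IsChain (· ≤ ·) (LeftBdry X) ∧ IsChain (· ≤ ·) (BottomBdry X) ∧
      ∀ p ∈ JoinIrr X, ∀ p' ∈ JoinIrr X, ¬ p ≤ p' → ¬ p' ≤ p →
        (p ∈ LeftBdry X ∧ p' ∈ BottomBdry X) ∨ (p ∈ BottomBdry X ∧ p' ∈ LeftBdry X) := by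
  have chainL : IsChain (· ≤ ·) (LeftBdry X) := by
    intro v hv w hw hne
    by_contra hcon
    push_neg at hcon
    obtain ⟨h1, h2⟩ := hcon
    rw [Prod.le_def, not_and_or, not_le, not_le] at h1 h2
    rcases h1 with h1 | h1 <;> rcases h2 with h2 | h2
    · omega
    · exact LB_aux hpoly hconv hlat hw hv h1 h2
    · exact LB_aux hpoly hconv hlat hv hw h2 h1
    · omega
  have chainB : IsChain (· ≤ ·) (BottomBdry X) := by
    intro v hv w hw hne
    by_contra hcon
    push_neg at hcon
    obtain ⟨h1, h2⟩ := hcon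
    rw [Prod.le_def, not_and_or, not_le, not_le] at h1 h2
    rcases h1 with h1 | h1 <;> rcases h2 with h2 | h2
    · omega
    · exact BB_aux hpoly hconv hlat hw hv h1 h2
    · exact BB_aux hpoly hconv hlat hv hw h2 h1
    · omega
  refine ⟨chainL, chainB, ?_⟩
  intro p hp p' hp' hle hle'
  have hne : p ≠ p' := fun h => hle (h ▸ le_refl p)
  rcases joinirr_bdry hpoly hconv hlat hp with hpL | hpB <;>
    rcases joinirr_bdry hpoly hconv hlat hp' with hpL' | hpB'
  · rcases chainL hpL hpL' hne with h | h
    · exact absurd h hle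
    · exact absurd h hle'
  · exact Or.inl ⟨hpL, hpB'⟩
  · exact Or.inr ⟨hpB, hpL'⟩
  · rcases chainB hpB hpB' hne with h | h
    · exact absurd h hle
    · exact absurd h hle'
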